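/- arXiv:2203.10070 — 3 statements merged into one kernel-verified Lean document; each statement's English description precedes it below -/
import Mathlib

section
/- Let T be a tree on a vertex set A with |A| ≥ 2, let y be a vertex not in A, and let G be a simple graph on vertex set A ∪ {y} such that every edge of T is an edge of G and every leaf of T is adjacent to y in G. Then G has no cut vertex; that is, for every vertex v of G, the graph G − v is connected. -/
open SimpleGraph

/-- In a tree, a vertex `u ≠ a` of degree at least 2 has a neighbor strictly farther
from `a` than `u` is. -/
lemma tree_exists_farther_neighbor {A : Type*} [Fintype A] [DecidableEq A]
    (T : SimpleGraph A) [DecidableRel T.Adj] (hT : T.IsTree) (a u : A)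
    (hua : u ≠ a) (hdeg : 2 ≤ T.degree u) :
    ∃ v, T.Adj u v ∧ T.dist a u < T.dist a v := by
  obtain ⟨p, hp, hplen⟩ := hT.isConnected.exists_path_of_dist a u
  have hd : 0 < T.dist a u := hT.isConnected.pos_dist_of_ne (Ne.symm hua)
  set q := p.reverse with hq
  have hqlen : q.length = T.dist a u := by simp [hq, hplen]
  have hqpath : q.IsPath := hp.reverse
  have hadjw : T.Adj u (q.getVert 1) := by
    have := q.adj_getVert_succ (i := 0) (by omega)
    simpa [SimpleGraph.Walk.getVert_zero] using this
  set w := q.getVert 1 with hw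
  -- pick a neighbor v ≠ w
  have hcard : 1 < (T.neighborFinset u).card := by
    rwa [SimpleGraph.card_neighborFinset_eq_degree]
  obtain ⟨v, hvmem, hvw⟩ := Finset.exists_mem_ne hcard w
  rw [SimpleGraph.mem_neighborFinset] at hvmem
  refine ⟨v, hvmem, ?_⟩
  by_contra hle
  push_neg at hle
  -- r : shortest path a → v
  obtain ⟨r, hr, hrlen⟩ := hT.isConnected.exists_path_of_dist a v
  by_cases hur : u ∈ r.support
  · -- then p is a prefix of r, forcing r to end at u; contradiction
    have htu : (r.takeUntil u hur).IsPath := hr.takeUntil hur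
    have hpe : r.takeUntil u hur = p := by
      have h1 := hT.existsUnique_path a u
      exact h1.unique htu hp
    have hlen1 : (r.takeUntil u hur).length ≤ r.length := r.length_takeUntil_le hur
    have : T.dist a u ≤ T.dist a v := by
      rw [← hplen, ← hpe, ← hrlen] at *
      omega
    have hspec := r.take_spec hur
    have hlen2 : (r.takeUntil u hur).length + (r.dropUntil u hur).length = r.length := by
      rw [← SimpleGraph.Walk.length_append, hspec]
    have hdrop0 : (r.dropUntil u hur).length = 0 := by
      rw [hpe, hplen] at hlen2
      rw [hrlen] at hlen2
      omega
    have : u = v := by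
      have := SimpleGraph.Walk.eq_of_length_eq_zero hdrop0
      exact this
    exact (T.ne_of_adj hvmem) this
  · -- extend r by the edge v-u; get a second path u → a
    have hs : (SimpleGraph.Walk.cons hvmem r.reverse).IsPath := by
      rw [SimpleGraph.Walk.cons_isPath_iff]
      exact ⟨hr.reverse, by simpa using hur⟩
    have hqp : q.IsPath := hqpath
    have heq : SimpleGraph.Walk.cons hvmem r.reverse = q := by
      have h1 := hT.existsUnique_path u a
      exact h1.unique hs hqp
    have : v = w := by
      have := congrArg (fun z => SimpleGraph.Walk.getVert z 1) heq
      simpa [SimpleGraph.Walk.getVert_cons_succ (n := 0)] using this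
    exact hvw this

/-- From any vertex `u ≠ a` of a tree there is a walk avoiding `a` to a leaf. -/
lemma tree_walk_to_leaf_avoiding {A : Type*} [Fintype A] [DecidableEq A]
    (T : SimpleGraph A) [DecidableRel T.Adj] (hT : T.IsTree) (a : A) :
    ∀ u, u ≠ a → ∃ ℓ, T.degree ℓ ≤ 1 ∧ ∃ p : T.Walk u ℓ, a ∉ p.support := by
  suffices H : ∀ n u, Fintype.card A - T.dist a u ≤ n → u ≠ a →
      ∃ ℓ, T.degree ℓ ≤ 1 ∧ ∃ p : T.Walk u ℓ, a ∉ p.support by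
    intro u hu
    exact H (Fintype.card A) u (by omega) hu
  intro n
  induction n with
  | zero =>
      intro u hle hu
      -- dist a u ≥ card A is impossible: shortest path is a path
      obtain ⟨p, hp, hplen⟩ := hT.isConnected.exists_path_of_dist a u
      have := hp.length_lt
      omega
  | succ n ih =>
      intro u hle hu
      by_cases hdeg : T.degree u ≤ 1
      · exact ⟨u, hdeg, SimpleGraph.Walk.nil, by simp [Ne.symm hu]⟩
      · push_neg at hdeg
        obtain ⟨v, hadj, hlt⟩ := tree_exists_farther_neighbor T hT a u hu (by omega)
        have hva : v ≠ a := by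
          intro h; subst h
          rw [SimpleGraph.dist_self] at hlt; omega
        obtain ⟨ℓ, hℓ, q, hq⟩ := ih v (by omega) hva
        refine ⟨ℓ, hℓ, SimpleGraph.Walk.cons hadj q, ?_⟩
        simp only [SimpleGraph.Walk.support_cons, List.mem_cons]
        push_neg
        exact ⟨Ne.symm hu, hq⟩

/-- Lift a walk in `T` avoiding `a` to reachability in `G` minus `some a`. -/
lemma lift_walk_reach {A : Type*}
    (T : SimpleGraph A) (G : SimpleGraph (Option A))
    (hTG : ∀ u v : A, T.Adj u v → G.Adj (some u) (some v)) (a : A) :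
    ∀ {u ℓ : A} (q : T.Walk u ℓ), a ∉ q.support →
      ∀ (hu : (some u : Option A) ∈ {w : Option A | w ≠ some a})
        (hℓ : (some ℓ : Option A) ∈ {w : Option A | w ≠ some a}),
      (G.induce {w : Option A | w ≠ some a}).Reachable ⟨some u, hu⟩ ⟨some ℓ, hℓ⟩ := by
  intro u ℓ q
  induction q with
  | nil => intro _ _ _; rfl
  | @cons u b ℓ h q ih =>
      intro hsup hu hℓ
      simp only [SimpleGraph.Walk.support_cons, List.mem_cons] at hsup
      push_neg at hsup
      have h1 : a ∉ q.support := hsup.2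
      have hadj : (G.induce {w : Option A | w ≠ some a}).Adj
          ⟨some u, by simp only [Set.mem_setOf_eq, ne_eq, Option.some.injEq]; exact fun e => hsup.1 e.symm⟩
          ⟨some b, by
            simp only [Set.mem_setOf_eq, ne_eq, Option.some.injEq]
            rintro rfl
            exact h1 q.start_mem_support⟩ := by
        simp only [SimpleGraph.comap_adj, Function.Embedding.coe_subtype]
        exact hTG _ _ h
      exact hadj.reachable.trans (ih h1 _ hℓ)

/-- Let `T` be a tree on a vertex set `A` with at least two vertices, let `y` be a new
vertex (`none` in `Option A`), and let `G` be a simple graph on `A ∪ {y}` containing all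
edges of `T` and an edge from every leaf of `T` to `y`. Then `G` has no cut vertex:
deleting any single vertex leaves a connected graph. -/
theorem tree_plus_apex_no_cut_vertex
    {A : Type*} [Fintype A] [DecidableEq A]
    (T : SimpleGraph A) [DecidableRel T.Adj] (hT : T.IsTree) (hA : 2 ≤ Fintype.card A)
    (G : SimpleGraph (Option A))
    (hTG : ∀ u v : A, T.Adj u v → G.Adj (some u) (some v))
    (hleaf : ∀ ℓ : A, T.degree ℓ ≤ 1 → G.Adj (some ℓ) none) :
    ∀ v : Option A, (G.induce {w : Option A | w ≠ v}).Connected := by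
  intro v
  have hne : Nonempty A := Fintype.card_pos_iff.mp (by omega)
  obtain ⟨a0⟩ := hne
  cases v with
  | none =>
      -- deleting the apex: the induced graph contains T
      have hhub : (some a0 : Option A) ∈ {w : Option A | w ≠ none} := by simp
      have key : ∀ x : {w : Option A | w ≠ none},
          (G.induce {w : Option A | w ≠ none}).Reachable x ⟨some a0, hhub⟩ := by
        rintro ⟨x, hx⟩
        cases x with
        | none => exact absurd rfl hx
        | some u =>
            have hreach : T.Reachable u a0 := hT.isConnected.preconnected u a0
            let φ : T →g (G.induce {w : Option A | w ≠ none}) :=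
              { toFun := fun z => ⟨some z, by simp⟩
                map_rel' := by
                  intro z w h
                  simp only [SimpleGraph.comap_adj, Function.Embedding.coe_subtype]
                  exact hTG _ _ h }
            exact hreach.map φ
      have : Nonempty {w : Option A | w ≠ none} := ⟨⟨some a0, hhub⟩⟩
      exact ⟨fun x y => (key x).trans (key y).symm⟩
  | some a =>
      have hhub : (none : Option A) ∈ {w : Option A | w ≠ some a} := by simp
      have key : ∀ x : {w : Option A | w ≠ some a},
          (G.induce {w : Option A | w ≠ some a}).Reachable x ⟨none, hhub⟩ := by
        rintro ⟨x, hx⟩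
        cases x with
        | none => rfl
        | some u =>
            have hua : u ≠ a := fun h => hx (by simp [h])
            obtain ⟨ℓ, hℓdeg, q, hq⟩ := tree_walk_to_leaf_avoiding T hT a u hua
            have h1 := lift_walk_reach T G hTG a q hq (by simpa using hua)
              (by
                simp only [Set.mem_setOf_eq, ne_eq, Option.some.injEq]
                rintro rfl
                exact hq q.end_mem_support)
            have hℓa : ℓ ≠ a := by
              rintro rfl
              exact hq q.end_mem_support
            have h2 : (G.induce {w : Option A | w ≠ some a}).Adj
                ⟨some ℓ, by simpa using hℓa⟩ ⟨none, hhub⟩ := by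
              simp only [SimpleGraph.comap_adj, Function.Embedding.coe_subtype]
              exact hleaf ℓ hℓdeg
            exact (h1.trans h2.reachable)
      have : Nonempty {w : Option A | w ≠ some a} := ⟨⟨none, hhub⟩⟩
      exact ⟨fun x y => (key x).trans (key y).symm⟩
end

section
/- Let G be a finite simple graph, let B be a 2-connected induced subgraph of G with at least 3 vertices, and let H be a connected subgraph of G vertex-disjoint from B. If at least three vertices of B have a neighbour in H, then G contains a K₄ minor model: four pairwise disjoint nonempty vertex sets W₁, W₂, W₃, W₄, each inducing a connected subgraph of G, such that for every pair i ≠ j there is an edge of G between Wᵢ and Wⱼ. -/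
set_option linter.unusedSectionVars false

open SimpleGraph

namespace K4Aux

variable {V : Type*} [DecidableEq V] {G : SimpleGraph V}

/-- From connectivity of an induced subgraph, extract a path in `G` staying in `S`. -/
lemma exists_path_in_set {S : Set V} (hconn : (G.induce S).Connected)
    {a b : V} (ha : a ∈ S) (hb : b ∈ S) :
    ∃ p : G.Walk a b, p.IsPath ∧ ∀ z ∈ p.support, z ∈ S := by
  rw [connected_induce_iff] at hconn
  obtain ⟨-, h⟩ := (Subgraph.connected_iff_forall_exists_walk_subgraph _).mp hconn
  obtain ⟨p, hp⟩ := h (by exact ha) (by exact hb)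
  refine ⟨p.bypass, p.bypass_isPath, fun z hz => ?_⟩
  have hz' : z ∈ p.support := p.support_bypass_subset hz
  have : z ∈ p.toSubgraph.verts := by
    rw [Walk.verts_toSubgraph]; exact hz'
  simpa using hp.1 this

/-- Truncate a path at the first vertex belonging to `S`. -/
lemma truncate_at_first {S : Set V} :
    ∀ {a b : V} (w : G.Walk a b), w.IsPath → b ∈ S →
    ∃ (x : V) (u : G.Walk a x), u.IsPath ∧ x ∈ S ∧
      (∀ z ∈ u.support, z ∈ w.support) ∧ (∀ z ∈ u.support, z ∈ S → z = x) := by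
  intro a b w
  induction w with
  | @nil u =>
    intro _ hb
    exact ⟨u, Walk.nil, Walk.IsPath.nil, hb, by simp, by simp⟩
  | @cons a c b h w ih =>
    intro hw hb
    by_cases haS : a ∈ S
    · exact ⟨a, Walk.nil, Walk.IsPath.nil, haS, by simp, by simp⟩
    · obtain ⟨x, u, hu, hxS, hsub, hfirst⟩ := ih hw.of_cons hb
      refine ⟨x, Walk.cons h u, ?_, hxS, ?_, ?_⟩
      · rw [Walk.cons_isPath_iff]
        refine ⟨hu, fun hmem => ?_⟩
        exact ((Walk.cons_isPath_iff h w).mp hw).2 (hsub _ hmem)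
      · intro z hz
        rw [Walk.support_cons] at hz ⊢
        rcases List.mem_cons.mp hz with hz | hz
        · simp [hz]
        · simp [hsub _ hz]
      · intro z hz hzS
        rw [Walk.support_cons] at hz
        rcases List.mem_cons.mp hz with hz | hz
        · exact absurd (hz ▸ hzS) haS
        · exact hfirst _ hz hzS

/-- A path from `u` to `u` has support `{u}`. -/
lemma eq_of_mem_support_isPath_loop {u : V} {p : G.Walk u u} (hp : p.IsPath) :
    ∀ z ∈ p.support, z = u := by
  cases p with
  | nil => simp
  | cons h w =>
    exfalso
    rw [Walk.cons_isPath_iff] at hp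
    exact hp.2 w.end_mem_support

/-- Splitting off the final vertex of a nontrivial path: the set of remaining vertices is
the support of a path from `a`, whose last vertex is adjacent to `b`. -/
lemma penult_split {a b : V} (p : G.Walk a b) (hp : p.IsPath) (hab : a ≠ b) :
    ∃ (c : V) (q : G.Walk a c), q.IsPath ∧ G.Adj c b ∧
      (∀ z, z ∈ q.support ↔ z ∈ p.support ∧ z ≠ b) := by
  cases hrev : p.reverse with
  | nil =>
    exfalso
    have := congrArg Walk.length hrev
    rw [Walk.length_reverse] at this
    exact hab (by cases p <;> simp_all)
  | @cons _ c _ h r =>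
    have hpr : p.reverse.IsPath := hp.reverse
    rw [hrev, Walk.cons_isPath_iff] at hpr
    refine ⟨c, r.reverse, hpr.1.reverse, h.symm, fun z => ?_⟩
    have hmem : ∀ y, y ∈ p.support ↔ y = b ∨ y ∈ r.support := by
      intro y
      have h1 : y ∈ p.support ↔ y ∈ p.reverse.support := by
        rw [Walk.support_reverse, List.mem_reverse]
      rw [h1, hrev, Walk.support_cons, List.mem_cons]
    constructor
    · intro hz
      rw [Walk.support_reverse, List.mem_reverse] at hz
      refine ⟨(hmem z).mpr (Or.inr hz), fun hzb => ?_⟩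
      exact hpr.2 (hzb ▸ hz)
    · rintro ⟨hz, hzb⟩
      rcases (hmem z).mp hz with hz | hz
      · exact absurd hz hzb
      · rw [Walk.support_reverse, List.mem_reverse]; exact hz

lemma isPath_append {a b c : V} {p : G.Walk a b} {q : G.Walk b c}
    (hp : p.IsPath) (hq : q.IsPath)
    (hint : ∀ z, z ∈ p.support → z ∈ q.support → z = b) :
    (p.append q).IsPath := by
  rw [Walk.isPath_def, Walk.support_append]
  refine List.Nodup.append hp.support_nodup ?_ ?_
  · have := hq.support_nodup
    rw [q.support_eq_cons] at this
    exact this.of_cons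
  · intro z hz hz'
    have hzq : z ∈ q.support := by
      rw [q.support_eq_cons]; exact List.mem_cons_of_mem _ hz'
    have hzb := hint z hz hzq
    subst hzb
    have := hq.support_nodup
    rw [q.support_eq_cons] at this
    exact (List.nodup_cons.mp this).1 hz'

lemma takeUntil_inter {a b x : V} (p : G.Walk a b) (hp : p.IsPath) (hx : x ∈ p.support) :
    ∀ z, z ∈ (p.takeUntil x hx).support → z ∈ (p.dropUntil x hx).support → z = x := by
  intro z hz₁ hz₂
  have hsp := p.take_spec hx
  have hnd : ((p.takeUntil x hx).append (p.dropUntil x hx)).IsPath := by rw [hsp]; exact hp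
  rw [Walk.isPath_def, Walk.support_append] at hnd
  rw [(p.dropUntil x hx).support_eq_cons, List.mem_cons] at hz₂
  rcases hz₂ with hz₂ | hz₂
  · exact hz₂
  · exact absurd hz₂ ((List.nodup_append'.mp hnd).2.2 hz₁)

lemma mem_takeUntil_or_dropUntil {a b x : V} {p : G.Walk a b} (hx : x ∈ p.support) :
    ∀ z ∈ p.support, z ∈ (p.takeUntil x hx).support ∨ z ∈ (p.dropUntil x hx).support := by
  intro z hz
  conv at hz => rw [← p.take_spec hx]
  rw [Walk.support_append, List.mem_append] at hz
  rcases hz with hz | hz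
  · exact Or.inl hz
  · right
    rw [(p.dropUntil x hx).support_eq_cons]
    exact List.mem_cons_of_mem _ hz

/-- Core construction 1: split a cycle `r₁ ⬝ r₂ ∪ s` at an interior point `x` of the
first path; the piece containing `u₁` keeps `x`. -/
lemma split_main {u₁ u₂ x : V} (r₁ : G.Walk u₁ x) (r₂ : G.Walk x u₂) (s : G.Walk u₁ u₂)
    (h₁ : r₁.IsPath) (h₂ : r₂.IsPath) (hs : s.IsPath)
    (h12 : ∀ z, z ∈ r₁.support → z ∈ r₂.support → z = x)
    (hzs : ∀ z, z ∈ r₁.support ∨ z ∈ r₂.support → z ∈ s.support → z = u₁ ∨ z = u₂)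
    (hne : u₁ ≠ u₂) (hxu₂ : x ≠ u₂) :
    ∃ Wa Wb : Set V,
      Wa = {z | z ∈ r₁.support} ∧
      Wb = ({z | z ∈ r₂.support} \ {x}) ∪ ({z | z ∈ s.support} \ {u₁}) ∧
      (G.induce Wa).Connected ∧ (G.induce Wb).Connected ∧ Disjoint Wa Wb ∧
      ∃ aa ∈ Wa, ∃ bb ∈ Wb, G.Adj aa bb := by
  obtain ⟨c, q₂, hq₂, hcx, hchar₂⟩ := penult_split r₂.reverse h₂.reverse (Ne.symm hxu₂)
  obtain ⟨d, q₃, hq₃, hdu₁, hchar₃⟩ := penult_split s.reverse hs.reverse (Ne.symm hne)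
  have hset₂ : {z | z ∈ q₂.support} = {z | z ∈ r₂.support} \ {x} := by
    ext z
    simp only [Set.mem_setOf_eq, Set.mem_diff, Set.mem_singleton_iff, hchar₂ z,
      Walk.support_reverse, List.mem_reverse]
  have hset₃ : {z | z ∈ q₃.support} = {z | z ∈ s.support} \ {u₁} := by
    ext z
    simp only [Set.mem_setOf_eq, Set.mem_diff, Set.mem_singleton_iff, hchar₃ z,
      Walk.support_reverse, List.mem_reverse]
  refine ⟨_, _, rfl, rfl, r₁.connected_induce_support, ?_, ?_, ?_⟩
  · rw [← hset₂, ← hset₃]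
    have := induce_union_connected (G := G)
      q₂.connected_induce_support.preconnected q₃.connected_induce_support.preconnected
      ⟨u₂, q₂.start_mem_support, q₃.start_mem_support⟩
    exact this
  · rw [Set.disjoint_left]
    rintro z hz (⟨hz₂, hzx⟩ | ⟨hzs', hzu₁⟩)
    · exact hzx (h12 z hz hz₂)
    · rcases hzs z (Or.inl hz) hzs' with h | h
      · exact hzu₁ h
      · subst h
        exact hxu₂ (h12 _ hz r₂.end_mem_support).symm
  · refine ⟨x, r₁.end_mem_support, c, Or.inl ?_, hcx.symm⟩
    rw [← hset₂]
    exact q₂.end_mem_support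

/-- Core construction 2: split at an interior point `x` of the first path; the piece
containing `u₁` does not keep `x`. -/
lemma split_main' {u₁ u₂ x : V} (r₁ : G.Walk u₁ x) (r₂ : G.Walk x u₂) (s : G.Walk u₁ u₂)
    (h₁ : r₁.IsPath) (h₂ : r₂.IsPath) (hs : s.IsPath)
    (h12 : ∀ z, z ∈ r₁.support → z ∈ r₂.support → z = x)
    (hzs : ∀ z, z ∈ r₁.support ∨ z ∈ r₂.support → z ∈ s.support → z = u₁ ∨ z = u₂)
    (hne : u₁ ≠ u₂) (hxu₁ : x ≠ u₁) :
    ∃ Wa Wb : Set V,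
      Wa = {z | z ∈ r₁.support} \ {x} ∧
      Wb = {z | z ∈ r₂.support} ∪ ({z | z ∈ s.support} \ {u₁}) ∧
      (G.induce Wa).Connected ∧ (G.induce Wb).Connected ∧ Disjoint Wa Wb ∧
      ∃ aa ∈ Wa, ∃ bb ∈ Wb, G.Adj aa bb := by
  obtain ⟨c, q₁, hq₁, hcx, hchar₁⟩ := penult_split r₁ h₁ (Ne.symm hxu₁)
  obtain ⟨d, q₃, hq₃, hdu₁, hchar₃⟩ := penult_split s.reverse hs.reverse (Ne.symm hne)
  have hset₁ : {z | z ∈ q₁.support} = {z | z ∈ r₁.support} \ {x} := by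
    ext z
    simp only [Set.mem_setOf_eq, Set.mem_diff, Set.mem_singleton_iff, hchar₁ z]
  have hset₃ : {z | z ∈ q₃.support} = {z | z ∈ s.support} \ {u₁} := by
    ext z
    simp only [Set.mem_setOf_eq, Set.mem_diff, Set.mem_singleton_iff, hchar₃ z,
      Walk.support_reverse, List.mem_reverse]
  refine ⟨_, _, rfl, rfl, ?_, ?_, ?_, ?_⟩
  · rw [← hset₁]; exact q₁.connected_induce_support
  · rw [← hset₃]
    exact induce_union_connected (G := G)
      r₂.connected_induce_support.preconnected q₃.connected_induce_support.preconnected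
      ⟨u₂, r₂.end_mem_support, q₃.start_mem_support⟩
  · rw [Set.disjoint_left]
    rintro z ⟨hz, hzx⟩ (hz₂ | ⟨hzs', hzu₁⟩)
    · exact hzx (h12 z hz hz₂)
    · rcases hzs z (Or.inl hz) hzs' with h | h
      · exact hzu₁ h
      · subst h
        exact hzx (h12 _ hz r₂.end_mem_support)
  · refine ⟨c, ?_, x, Or.inl r₂.start_mem_support, hcx⟩
    rw [← hset₁]
    exact q₁.end_mem_support

/-- Two internally disjoint paths between `a` and `b`, inside `B`. -/
def Good (G : SimpleGraph V) (B : Set V) (a b : V) : Prop :=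
  ∃ p q : G.Walk a b, p.IsPath ∧ q.IsPath ∧ (∀ z ∈ p.support, z ∈ B) ∧
    (∀ z ∈ q.support, z ∈ B) ∧ ∀ z, z ∈ p.support → z ∈ q.support → z = a ∨ z = b

lemma good_base {B : Set V} (hB2conn : ∀ w ∈ B, (G.induce (B \ {w})).Connected)
    (hBcard : 3 ≤ B.ncard) (hBfin : B.Finite) {a b : V} (ha : a ∈ B) (hb : b ∈ B)
    (hadj : G.Adj a b) : Good G B a b := by
  have hab : a ≠ b := hadj.ne
  have hd : (B \ {a, b}).Nonempty := by
    have hsub : ({a, b} : Set V) ⊆ B := by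
      rintro z (rfl | rfl) <;> simp [ha, hb]
    have h2 : ({a, b} : Set V).ncard ≤ 2 := by
      have := Set.ncard_insert_le a ({b} : Set V)
      simpa using this
    have := Set.ncard_diff hsub (Set.Finite.insert _ (Set.finite_singleton _))
    apply Set.nonempty_of_ncard_ne_zero
    omega
  obtain ⟨d, hdB, hdab⟩ := hd
  have hda : d ≠ a := fun h => hdab (by simp [h])
  have hdb : d ≠ b := fun h => hdab (by simp [h])
  obtain ⟨w, hwp, hwB⟩ := exists_path_in_set (hB2conn b hb) (⟨ha, by simp [hab]⟩ :
    a ∈ B \ {b}) (⟨hdB, by simp [hdb]⟩ : d ∈ B \ {b})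
  cases w with
  | nil => exact absurd rfl hda.symm
  | @cons _ e _ h w' =>
    have heB : e ∈ B \ {b} := hwB e (by simp [Walk.support_cons])
    have hea : e ≠ a := h.ne'
    obtain ⟨r, hrp, hrB⟩ := exists_path_in_set (hB2conn a ha)
      (⟨heB.1, by simp [hea]⟩ : e ∈ B \ {a}) (⟨hb, by simp [hab.symm]⟩ : b ∈ B \ {a})
    refine ⟨Walk.cons hadj Walk.nil, Walk.cons h r, ?_, ?_, ?_, ?_, ?_⟩
    · simp [Walk.cons_isPath_iff, hab]
    · rw [Walk.cons_isPath_iff]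
      exact ⟨hrp, fun hmem => by simpa using (hrB a hmem).2⟩
    · intro z hz
      simp only [Walk.support_cons, Walk.support_nil, List.mem_cons,
        List.mem_singleton] at hz
      rcases hz with rfl | rfl | h; exacts [ha, hb, absurd h (by simp)]
    · intro z hz
      simp only [Walk.support_cons, List.mem_cons] at hz
      rcases hz with rfl | hz
      exacts [ha, (hrB z hz).1]
    · intro z hz _
      simp only [Walk.support_cons, Walk.support_nil, List.mem_cons,
        List.mem_singleton] at hz
      rcases hz with rfl | rfl | h
      exacts [Or.inl rfl, Or.inr rfl, absurd h (by simp)]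

lemma good_ext_mem {B : Set V} {a c b : V} (p q : G.Walk a c)
    (hp : p.IsPath) (hq : q.IsPath)
    (hpB : ∀ z ∈ p.support, z ∈ B) (hqB : ∀ z ∈ q.support, z ∈ B)
    (hint : ∀ z, z ∈ p.support → z ∈ q.support → z = a ∨ z = c)
    (hb : b ∈ p.support) (hba : b ≠ a) (hbc : b ≠ c) : Good G B a b := by
  refine ⟨p.takeUntil b hb, q.append (p.dropUntil b hb).reverse, hp.takeUntil hb, ?_, ?_, ?_, ?_⟩
  · refine isPath_append hq (hp.dropUntil hb).reverse ?_
    intro z hz hz'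
    rw [Walk.support_reverse, List.mem_reverse] at hz'
    rcases hint z (p.support_dropUntil_subset hb hz') hz with rfl | rfl
    · exact absurd (takeUntil_inter p hp hb _ ((p.takeUntil b hb).start_mem_support) hz') hba.symm
    · rfl
  · exact fun z hz => hpB z (p.support_takeUntil_subset hb hz)
  · intro z hz
    rw [Walk.mem_support_append_iff] at hz
    rcases hz with hz | hz
    · exact hqB z hz
    · rw [Walk.support_reverse, List.mem_reverse] at hz
      exact hpB z (p.support_dropUntil_subset hb hz)
  · intro z hz hz'
    rw [Walk.mem_support_append_iff] at hz'
    rcases hz' with hz' | hz'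
    · rcases hint z (p.support_takeUntil_subset hb hz) hz' with rfl | rfl
      · exact Or.inl rfl
      · exact absurd (takeUntil_inter p hp hb _ hz ((p.dropUntil b hb).end_mem_support)) hbc.symm
    · rw [Walk.support_reverse, List.mem_reverse] at hz'
      exact Or.inr (takeUntil_inter p hp hb _ hz hz')

lemma good_ext_new {B : Set V} {a c b x : V} (p q : G.Walk a c)
    (hp : p.IsPath) (hq : q.IsPath)
    (hpB : ∀ z ∈ p.support, z ∈ B) (hqB : ∀ z ∈ q.support, z ∈ B)
    (hint : ∀ z, z ∈ p.support → z ∈ q.support → z = a ∨ z = c)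
    (hcb : G.Adj c b) (hbB : b ∈ B)
    (hbp : b ∉ p.support) (hbq : b ∉ q.support)
    (r : G.Walk b x) (hr : r.IsPath)
    (hrB : ∀ z ∈ r.support, z ∈ B) (hrc : ∀ z ∈ r.support, z ≠ c)
    (hrS : ∀ z ∈ r.support, z ∈ p.support ∨ z ∈ q.support → z = x)
    (hx : x ∈ p.support) (hxa : x ≠ a) : Good G B a b := by
  have hxc : x ≠ c := hrc x r.end_mem_support
  have hQ : (q.append (Walk.cons hcb Walk.nil)).IsPath := by
    refine isPath_append hq ?_ ?_
    · simp [Walk.cons_isPath_iff, hcb.ne]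
    · intro z hz hz'
      simp only [Walk.support_cons, Walk.support_nil, List.mem_cons,
        List.mem_singleton] at hz'
      rcases hz' with rfl | rfl | h
      exacts [rfl, absurd hz hbq, absurd h (by simp)]
  refine ⟨(p.takeUntil x hx).append r.reverse, q.append (Walk.cons hcb Walk.nil),
    ?_, hQ, ?_, ?_, ?_⟩
  · refine isPath_append (hp.takeUntil hx) hr.reverse ?_
    intro z hz hz'
    rw [Walk.support_reverse, List.mem_reverse] at hz'
    exact hrS z hz' (Or.inl (p.support_takeUntil_subset hx hz))
  · intro z hz
    rw [Walk.mem_support_append_iff] at hz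
    rcases hz with hz | hz
    · exact hpB z (p.support_takeUntil_subset hx hz)
    · rw [Walk.support_reverse, List.mem_reverse] at hz
      exact hrB z hz
  · intro z hz
    rw [Walk.mem_support_append_iff] at hz
    rcases hz with hz | hz
    · exact hqB z hz
    · simp only [Walk.support_cons, Walk.support_nil, List.mem_cons,
        List.mem_singleton] at hz
      rcases hz with rfl | rfl | h
      exacts [hqB _ q.end_mem_support, hbB, absurd h (by simp)]
  · intro z hz hz'
    rw [Walk.mem_support_append_iff] at hz hz'
    have hz'' : z ∈ q.support ∨ z = c ∨ z = b := by
      rcases hz' with hz' | hz'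
      · exact Or.inl hz'
      · simp only [Walk.support_cons, Walk.support_nil, List.mem_cons,
          List.mem_singleton] at hz'
        rcases hz' with rfl | rfl | h
        exacts [Or.inr (Or.inl rfl), Or.inr (Or.inr rfl), absurd h (by simp)]
    rcases hz with hz | hz
    · -- z on the initial segment of p
      have hzp : z ∈ p.support := p.support_takeUntil_subset hx hz
      rcases hz'' with hzq | rfl | rfl
      · rcases hint z hzp hzq with rfl | rfl
        · exact Or.inl rfl
        · exact absurd (takeUntil_inter p hp hx _ hz (p.dropUntil x hx).end_mem_support) hxc.symm
      · exact absurd (takeUntil_inter p hp hx _ hz (p.dropUntil x hx).end_mem_support) hxc.symm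
      · exact Or.inr rfl
    · -- z on r
      rw [Walk.support_reverse, List.mem_reverse] at hz
      rcases hz'' with hzq | rfl | rfl
      · have := hrS z hz (Or.inr hzq)
        subst this
        rcases hint z hx hzq with rfl | rfl
        · exact Or.inl rfl
        · exact absurd rfl hxc
      · exact absurd rfl (hrc z hz)
      · exact Or.inr rfl

lemma good_of_ne {B : Set V} (hBconn : (G.induce B).Connected)
    (hB2conn : ∀ w ∈ B, (G.induce (B \ {w})).Connected)
    (hBcard : 3 ≤ B.ncard) (hBfin : B.Finite) :
    ∀ a b, a ∈ B → b ∈ B → a ≠ b → Good G B a b := by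
  suffices H : ∀ n : ℕ, ∀ a b, ∀ (ha : a ∈ B) (hb : b ∈ B), a ≠ b →
      (G.induce B).dist ⟨a, ha⟩ ⟨b, hb⟩ = n → Good G B a b by
    exact fun a b ha hb hne => H _ a b ha hb hne rfl
  intro n
  induction n using Nat.strong_induction_on with
  | _ n IH =>
  intro a b ha hb hne hdist
  have hsne : (⟨a, ha⟩ : ↑B) ≠ ⟨b, hb⟩ := fun h => hne (congrArg Subtype.val h)
  have hpos : 0 < n := hdist ▸ hBconn.pos_dist_of_ne hsne
  obtain ⟨w, hwpath, hwlen⟩ := hBconn.exists_path_of_dist ⟨a, ha⟩ ⟨b, hb⟩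
  rw [hdist] at hwlen
  match n, hpos, hdist, hwlen with
  | 1, _, hdist, hwlen =>
    have hadj : (G.induce B).Adj ⟨a, ha⟩ ⟨b, hb⟩ := dist_eq_one_iff_adj.mp hdist
    exact good_base hB2conn hBcard hBfin ha hb hadj
  | (n + 2), _, hdist, hwlen =>
    cases hrev : w.reverse with
    | nil =>
      exfalso
      have := congrArg Walk.length hrev
      rw [Walk.length_reverse, hwlen] at this
      simp at this
    | @cons _ cvert _ h r =>
      obtain ⟨cv, hc⟩ := cvert
      have hcbadj : G.Adj cv b := h.symm
      have hlenr : r.length = n + 1 := by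
        have := congrArg Walk.length hrev
        rw [Walk.length_reverse, hwlen, Walk.length_cons] at this
        omega
      have hdac : (G.induce B).dist ⟨a, ha⟩ ⟨cv, hc⟩ ≤ n + 1 := by
        have := dist_le r.reverse
        rwa [Walk.length_reverse, hlenr] at this
      have hneac : a ≠ cv := by
        intro hEq
        have hEq' : (⟨a, ha⟩ : ↑B) = ⟨cv, hc⟩ := Subtype.ext hEq
        have hle : (G.induce B).dist ⟨a, ha⟩ ⟨b, hb⟩ ≤ 1 := by
          rw [hEq']
          have := dist_le (Walk.cons h.symm Walk.nil : (G.induce B).Walk ⟨cv, hc⟩ ⟨b, hb⟩)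
          simpa using this
        omega
      obtain ⟨p, q, hpp, hqp, hpB, hqB, hint⟩ :=
        IH _ (by omega : (G.induce B).dist ⟨a, ha⟩ ⟨cv, hc⟩ < n + 2) a cv ha hc hneac rfl
      have hbcv : b ≠ cv := hcbadj.ne'
      by_cases hbp : b ∈ p.support
      · exact good_ext_mem p q hpp hqp hpB hqB hint hbp hne.symm hbcv
      by_cases hbq : b ∈ q.support
      · exact good_ext_mem q p hqp hpp hqB hpB (fun z h1 h2 => hint z h2 h1) hbq hne.symm hbcv
      -- b is outside the cycle
      obtain ⟨w₂, hw₂p, hw₂B⟩ := exists_path_in_set (hB2conn cv hc)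
        (⟨hb, by simp [hbcv]⟩ : b ∈ B \ {cv}) (⟨ha, by simp [hneac]⟩ : a ∈ B \ {cv})
      obtain ⟨x, r₀, hr₀p, hxS, hr₀sub, hr₀first⟩ :=
        truncate_at_first (S := {z | z ∈ p.support ∨ z ∈ q.support}) w₂ hw₂p
          (Or.inl p.start_mem_support)
      have hr₀B : ∀ z ∈ r₀.support, z ∈ B := fun z hz => (hw₂B z (hr₀sub z hz)).1
      have hr₀c : ∀ z ∈ r₀.support, z ≠ cv := fun z hz => by
        have := (hw₂B z (hr₀sub z hz)).2
        simpa using this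
      by_cases hxa : x = a
      · subst hxa
        -- direct construction
        have hQ : (p.append (Walk.cons hcbadj Walk.nil)).IsPath := by
          refine isPath_append hpp ?_ ?_
          · simp [Walk.cons_isPath_iff, hcbadj.ne]
          · intro z hz hz'
            simp only [Walk.support_cons, Walk.support_nil, List.mem_cons,
              List.mem_singleton] at hz'
            rcases hz' with rfl | rfl | hh
            exacts [rfl, absurd hz hbp, absurd hh (by simp)]
        refine ⟨r₀.reverse, p.append (Walk.cons hcbadj Walk.nil), hr₀p.reverse, hQ, ?_, ?_, ?_⟩
        · intro z hz
          rw [Walk.support_reverse, List.mem_reverse] at hz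
          exact hr₀B z hz
        · intro z hz
          rw [Walk.mem_support_append_iff] at hz
          rcases hz with hz | hz
          · exact hpB z hz
          · simp only [Walk.support_cons, Walk.support_nil, List.mem_cons,
              List.mem_singleton] at hz
            rcases hz with rfl | rfl | hh
            exacts [hc, hb, absurd hh (by simp)]
        · intro z hz hz'
          rw [Walk.support_reverse, List.mem_reverse] at hz
          rw [Walk.mem_support_append_iff] at hz'
          rcases hz' with hz' | hz'
          · exact Or.inl (hr₀first z hz (Or.inl hz'))
          · simp only [Walk.support_cons, Walk.support_nil, List.mem_cons,
              List.mem_singleton] at hz'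
            rcases hz' with rfl | rfl | hh
            exacts [absurd rfl (hr₀c z hz), Or.inr rfl, absurd hh (by simp)]
      · rcases hxS with hxp | hxq
        · exact good_ext_new p q hpp hqp hpB hqB hint hcbadj hb hbp hbq r₀ hr₀p hr₀B hr₀c
            (fun z hz hmem => hr₀first z hz hmem) hxp hxa
        · exact good_ext_new q p hqp hpp hqB hpB (fun z h1 h2 => hint z h2 h1) hcbadj hb hbq hbp
            r₀ hr₀p hr₀B hr₀c (fun z hz hmem => hr₀first z hz hmem.symm) hxq hxa

lemma two_split {v₁ v₂ x y : V} (p q : G.Walk v₁ v₂)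
    (hp : p.IsPath) (hq : q.IsPath)
    (hint : ∀ z, z ∈ p.support → z ∈ q.support → z = v₁ ∨ z = v₂)
    (hne : v₁ ≠ v₂)
    (hx : x ∈ p.support) (hxv₂ : x ≠ v₂)
    (hy : y ∈ p.support ∨ y ∈ q.support) (hxy : x ≠ y) :
    ∃ W₁ W₂ : Set V,
      (G.induce W₁).Connected ∧ (G.induce W₂).Connected ∧ Disjoint W₁ W₂ ∧
      (∃ aa ∈ W₁, ∃ bb ∈ W₂, G.Adj aa bb) ∧
      v₁ ∈ W₁ ∧ v₂ ∈ W₂ ∧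
      ((x ∈ W₁ ∧ y ∈ W₂) ∨ (x ∈ W₂ ∧ y ∈ W₁)) ∧
      (∀ z ∈ W₁, z ∈ p.support ∨ z ∈ q.support) ∧
      (∀ z ∈ W₂, z ∈ p.support ∨ z ∈ q.support) := by
  have hr₁ : (p.takeUntil x hx).IsPath := hp.takeUntil hx
  have hr₂ : (p.dropUntil x hx).IsPath := hp.dropUntil hx
  have h12 := takeUntil_inter p hp hx
  have hcov := mem_takeUntil_or_dropUntil hx
  have hzs : ∀ z, z ∈ (p.takeUntil x hx).support ∨ z ∈ (p.dropUntil x hx).support →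
      z ∈ q.support → z = v₁ ∨ z = v₂ := by
    intro z hz hzq
    rcases hz with hz | hz
    · exact hint z (p.support_takeUntil_subset hx hz) hzq
    · exact hint z (p.support_dropUntil_subset hx hz) hzq
  by_cases hy₁ : y ∈ (p.takeUntil x hx).support
  · -- y lies on the initial segment
    have hxv₁ : x ≠ v₁ := by
      rintro rfl
      exact hxy (eq_of_mem_support_isPath_loop hr₁ y hy₁).symm
    by_cases hyv₁ : y = v₁
    · subst hyv₁
      obtain ⟨Wa, Wb, hWa, hWb, hca, hcb, hdisj', hadj'⟩ :=
        split_main' (p.takeUntil x hx) (p.dropUntil x hx) q hr₁ hr₂ hq h12 hzs hne hxv₁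
      refine ⟨Wa, Wb, hca, hcb, hdisj', hadj', ?_, ?_, ?_, ?_, ?_⟩
      · rw [hWa]
        exact ⟨(p.takeUntil x hx).start_mem_support, fun h => hxv₁ ((Set.mem_singleton_iff.mp h).symm)⟩
      · rw [hWb]
        exact Or.inl (p.dropUntil x hx).end_mem_support
      · refine Or.inr ⟨?_, ?_⟩
        · rw [hWb]; exact Or.inl (p.dropUntil x hx).start_mem_support
        · rw [hWa]
          exact ⟨(p.takeUntil x hx).start_mem_support, fun h => hxv₁ ((Set.mem_singleton_iff.mp h).symm)⟩
      · intro z hz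
        rw [hWa] at hz
        exact Or.inl (p.support_takeUntil_subset hx hz.1)
      · intro z hz
        rw [hWb] at hz
        rcases hz with hz | hz
        · exact Or.inl (p.support_dropUntil_subset hx hz)
        · exact Or.inr hz.1
    · -- reverse and split
      obtain ⟨Wa, Wb, hWa, hWb, hca, hcb, hdisj', hadj'⟩ :=
        split_main (p.dropUntil x hx).reverse (p.takeUntil x hx).reverse q.reverse
          hr₂.reverse hr₁.reverse hq.reverse
          (by
            intro z hz hz'
            rw [Walk.support_reverse, List.mem_reverse] at hz hz'
            exact h12 z hz' hz)
          (by
            intro z hz hz'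
            rw [Walk.support_reverse, List.mem_reverse] at hz'
            rcases hz with hz | hz <;> rw [Walk.support_reverse, List.mem_reverse] at hz
            · exact (hzs z (Or.inr hz) hz').symm
            · exact (hzs z (Or.inl hz) hz').symm)
          hne.symm hxv₁
      refine ⟨Wb, Wa, hcb, hca, hdisj'.symm, ?_, ?_, ?_, ?_, ?_, ?_⟩
      · obtain ⟨aa, haa, bb, hbb, hab⟩ := hadj'
        exact ⟨bb, hbb, aa, haa, hab.symm⟩
      · rw [hWb]
        refine Or.inl ⟨?_, fun h => hxv₁ ((Set.mem_singleton_iff.mp h).symm)⟩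
        simp only [Set.mem_setOf_eq, Walk.support_reverse, List.mem_reverse]
        exact (p.takeUntil x hx).start_mem_support
      · rw [hWa]
        simp only [Set.mem_setOf_eq, Walk.support_reverse, List.mem_reverse]
        exact (p.dropUntil x hx).end_mem_support
      · refine Or.inr ⟨?_, ?_⟩
        · rw [hWa]
          simp only [Set.mem_setOf_eq, Walk.support_reverse, List.mem_reverse]
          exact (p.dropUntil x hx).start_mem_support
        · rw [hWb]
          refine Or.inl ⟨?_, fun h => hxy ((Set.mem_singleton_iff.mp h).symm)⟩
          simp only [Set.mem_setOf_eq, Walk.support_reverse, List.mem_reverse]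
          exact hy₁
      · intro z hz
        rw [hWb] at hz
        rcases hz with hz | hz
        · simp only [Set.mem_diff, Set.mem_setOf_eq, Walk.support_reverse,
            List.mem_reverse] at hz
          exact Or.inl (p.support_takeUntil_subset hx hz.1)
        · simp only [Set.mem_diff, Set.mem_setOf_eq, Walk.support_reverse,
            List.mem_reverse] at hz
          exact Or.inr hz.1
      · intro z hz
        rw [hWa] at hz
        simp only [Set.mem_setOf_eq, Walk.support_reverse, List.mem_reverse] at hz
        exact Or.inl (p.support_dropUntil_subset hx hz)
  · -- main case: y not on the initial segment
    obtain ⟨Wa, Wb, hWa, hWb, hca, hcb, hdisj', hadj'⟩ :=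
      split_main (p.takeUntil x hx) (p.dropUntil x hx) q hr₁ hr₂ hq h12 hzs hne hxv₂
    refine ⟨Wa, Wb, hca, hcb, hdisj', hadj', ?_, ?_, ?_, ?_, ?_⟩
    · rw [hWa]
      exact (p.takeUntil x hx).start_mem_support
    · rw [hWb]
      exact Or.inr ⟨q.end_mem_support, fun h => hne ((Set.mem_singleton_iff.mp h).symm)⟩
    · refine Or.inl ⟨?_, ?_⟩
      · rw [hWa]; exact (p.takeUntil x hx).end_mem_support
      · rw [hWb]
        rcases hy with hyp | hyq
        · rcases hcov y hyp with hy' | hy'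
          · exact absurd hy' hy₁
          · exact Or.inl ⟨hy', fun h => hxy ((Set.mem_singleton_iff.mp h).symm)⟩
        · refine Or.inr ⟨hyq, fun h => ?_⟩
          have hyv : y = v₁ := Set.mem_singleton_iff.mp h
          exact hy₁ (hyv ▸ (p.takeUntil x hx).start_mem_support)
    · intro z hz
      rw [hWa] at hz
      exact Or.inl (p.support_takeUntil_subset hx hz)
    · intro z hz
      rw [hWb] at hz
      rcases hz with hz | hz
      · exact Or.inl (p.support_dropUntil_subset hx hz.1)
      · exact Or.inr hz.1

lemma attach_pair {v₁ v₂ x y : V} (p q : G.Walk v₁ v₂)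
    (hp : p.IsPath) (hq : q.IsPath)
    (hint : ∀ z, z ∈ p.support → z ∈ q.support → z = v₁ ∨ z = v₂)
    (hne : v₁ ≠ v₂)
    (hx : x ∈ p.support ∨ x ∈ q.support) (hy : y ∈ p.support ∨ y ∈ q.support)
    (hxy : x ≠ y) :
    ∃ W₁ W₂ : Set V,
      (G.induce W₁).Connected ∧ (G.induce W₂).Connected ∧ Disjoint W₁ W₂ ∧
      (∃ aa ∈ W₁, ∃ bb ∈ W₂, G.Adj aa bb) ∧
      v₁ ∈ W₁ ∧ v₂ ∈ W₂ ∧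
      ((x ∈ W₁ ∧ y ∈ W₂) ∨ (x ∈ W₂ ∧ y ∈ W₁)) ∧
      (∀ z ∈ W₁, z ∈ p.support ∨ z ∈ q.support) ∧
      (∀ z ∈ W₂, z ∈ p.support ∨ z ∈ q.support) := by
  have hint' : ∀ z, z ∈ q.support → z ∈ p.support → z = v₁ ∨ z = v₂ :=
    fun z h1 h2 => hint z h2 h1
  by_cases hxv₂ : x = v₂
  · -- swap the roles of x and y
    have hyv₂ : y ≠ v₂ := fun h => hxy (hxv₂.trans h.symm)
    rcases hy with hyp | hyq
    · obtain ⟨W₁, W₂, c₁, c₂, hd, hadj, m₁, m₂, hor, s₁, s₂⟩ :=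
        two_split p q hp hq hint hne hyp hyv₂ hx hxy.symm
      exact ⟨W₁, W₂, c₁, c₂, hd, hadj, m₁, m₂, hor.symm.imp And.symm And.symm, s₁, s₂⟩
    · obtain ⟨W₁, W₂, c₁, c₂, hd, hadj, m₁, m₂, hor, s₁, s₂⟩ :=
        two_split q p hq hp hint' hne hyq hyv₂ hx.symm hxy.symm
      exact ⟨W₁, W₂, c₁, c₂, hd, hadj, m₁, m₂, hor.symm.imp And.symm And.symm,
        fun z hz => (s₁ z hz).symm, fun z hz => (s₂ z hz).symm⟩
  · rcases hx with hxp | hxq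
    · obtain ⟨W₁, W₂, c₁, c₂, hd, hadj, m₁, m₂, hor, s₁, s₂⟩ :=
        two_split p q hp hq hint hne hxp hxv₂ hy hxy
      exact ⟨W₁, W₂, c₁, c₂, hd, hadj, m₁, m₂, hor, s₁, s₂⟩
    · obtain ⟨W₁, W₂, c₁, c₂, hd, hadj, m₁, m₂, hor, s₁, s₂⟩ :=
        two_split q p hq hp hint' hne hxq hxv₂ hy.symm hxy
      exact ⟨W₁, W₂, c₁, c₂, hd, hadj, m₁, m₂, hor,
        fun z hz => (s₁ z hz).symm, fun z hz => (s₂ z hz).symm⟩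

lemma three_split {B : Set V} {v₁ v₂ v₃ : V} (p q : G.Walk v₁ v₂)
    (hp : p.IsPath) (hq : q.IsPath)
    (hpB : ∀ z ∈ p.support, z ∈ B) (hqB : ∀ z ∈ q.support, z ∈ B)
    (hint : ∀ z, z ∈ p.support → z ∈ q.support → z = v₁ ∨ z = v₂)
    (hne : v₁ ≠ v₂)
    (h3 : v₃ ∈ p.support) (h31 : v₃ ≠ v₁) (h32 : v₃ ≠ v₂) :
    ∃ W₁ W₂ W₃ : Set V,
      (∀ z ∈ W₁, z ∈ B) ∧ (∀ z ∈ W₂, z ∈ B) ∧ (∀ z ∈ W₃, z ∈ B) ∧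
      v₁ ∈ W₁ ∧ v₂ ∈ W₂ ∧ v₃ ∈ W₃ ∧
      (G.induce W₁).Connected ∧ (G.induce W₂).Connected ∧ (G.induce W₃).Connected ∧
      Disjoint W₁ W₂ ∧ Disjoint W₁ W₃ ∧ Disjoint W₂ W₃ ∧
      (∃ a ∈ W₁, ∃ b ∈ W₂, G.Adj a b) ∧ (∃ a ∈ W₁, ∃ b ∈ W₃, G.Adj a b) ∧
      (∃ a ∈ W₂, ∃ b ∈ W₃, G.Adj a b) := by
  have hinter := takeUntil_inter p hp h3
  obtain ⟨c₁, w₁, hw₁, hc₁, hchar₁⟩ := penult_split (p.takeUntil v₃ h3) (hp.takeUntil h3) h31.symm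
  obtain ⟨c₃, w₃, hw₃, hc₃, hchar₃⟩ := penult_split (p.dropUntil v₃ h3) (hp.dropUntil h3) h32
  obtain ⟨c₂, w₂, hw₂, hc₂, hchar₂⟩ := penult_split q.reverse hq.reverse hne.symm
  have hmem₂ : ∀ z, z ∈ w₂.support ↔ z ∈ q.support ∧ z ≠ v₁ := by
    intro z
    rw [hchar₂ z, Walk.support_reverse, List.mem_reverse]
  refine ⟨{z | z ∈ w₁.support}, {z | z ∈ w₂.support}, {z | z ∈ w₃.support},
    ?_, ?_, ?_, ?_, ?_, ?_,
    w₁.connected_induce_support, w₂.connected_induce_support, w₃.connected_induce_support,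
    ?_, ?_, ?_, ?_, ?_, ?_⟩
  · intro z hz
    exact hpB z (p.support_takeUntil_subset h3 ((hchar₁ z).mp hz).1)
  · intro z hz
    exact hqB z ((hmem₂ z).mp hz).1
  · intro z hz
    exact hpB z (p.support_dropUntil_subset h3 ((hchar₃ z).mp hz).1)
  · exact w₁.start_mem_support
  · exact w₂.start_mem_support
  · exact w₃.start_mem_support
  · -- W₁ ∩ W₂ = ∅
    rw [Set.disjoint_left]
    intro z hz hz'
    obtain ⟨hz₁, hzv₃⟩ := (hchar₁ z).mp hz
    obtain ⟨hz₂, hzv₁⟩ := (hmem₂ z).mp hz'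
    rcases hint z (p.support_takeUntil_subset h3 hz₁) hz₂ with rfl | rfl
    · exact hzv₁ rfl
    · exact h32 (hinter _ hz₁ (p.dropUntil v₃ h3).end_mem_support).symm
  · -- W₁ ∩ W₃ = ∅
    rw [Set.disjoint_left]
    intro z hz hz'
    obtain ⟨hz₁, hzv₃⟩ := (hchar₁ z).mp hz
    obtain ⟨hz₃, _⟩ := (hchar₃ z).mp hz'
    exact hzv₃ (hinter _ hz₁ hz₃)
  · -- W₂ ∩ W₃ = ∅
    rw [Set.disjoint_left]
    intro z hz hz'
    obtain ⟨hz₂, hzv₁⟩ := (hmem₂ z).mp hz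
    obtain ⟨hz₃, hzv₂⟩ := (hchar₃ z).mp hz'
    rcases hint z (p.support_dropUntil_subset h3 hz₃) hz₂ with rfl | rfl
    · exact hzv₁ rfl
    · exact hzv₂ rfl
  · -- W₁ – W₂
    refine ⟨v₁, w₁.start_mem_support, c₂, w₂.end_mem_support, ?_⟩
    exact hc₂.symm
  · -- W₁ – W₃
    exact ⟨c₁, w₁.end_mem_support, v₃, w₃.start_mem_support, hc₁⟩
  · -- W₂ – W₃
    exact ⟨v₂, w₂.start_mem_support, c₃, w₃.end_mem_support, hc₃.symm⟩

end K4Aux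

open K4Aux in
/-- If `B` is a 2-connected induced subgraph of `G` (at least 3 vertices) and `H` is a
connected subgraph of `G` vertex-disjoint from `B` such that at least three vertices of
`B` have a neighbour in `H`, then `G` contains a `K₄` minor model. -/
theorem triple_attachment_to_biconnected_gives_K4_minor
    {V : Type*} [Fintype V] [DecidableEq V] (G : SimpleGraph V)
    (B H : Set V)
    (hBcard : 3 ≤ B.ncard)
    (hBconn : (G.induce B).Connected)
    (hB2conn : ∀ w ∈ B, (G.induce (B \ {w})).Connected)
    (hHconn : (G.induce H).Connected)
    (hdisj : Disjoint B H)
    (v₁ v₂ v₃ : V) (hv₁ : v₁ ∈ B) (hv₂ : v₂ ∈ B) (hv₃ : v₃ ∈ B)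
    (h12 : v₁ ≠ v₂) (h13 : v₁ ≠ v₃) (h23 : v₂ ≠ v₃)
    (hn₁ : ∃ h ∈ H, G.Adj v₁ h) (hn₂ : ∃ h ∈ H, G.Adj v₂ h) (hn₃ : ∃ h ∈ H, G.Adj v₃ h) :
    ∃ W : Fin 4 → Set V,
      (∀ i, (W i).Nonempty) ∧
      (∀ i, (G.induce (W i)).Connected) ∧
      (∀ i j, i ≠ j → Disjoint (W i) (W j)) ∧
      (∀ i j, i ≠ j → ∃ a ∈ W i, ∃ b ∈ W j, G.Adj a b) := by
  classical
  have hBfin : B.Finite := Set.toFinite B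
  suffices hmain : ∃ W₁ W₂ W₃ : Set V,
      (∀ z ∈ W₁, z ∈ B) ∧ (∀ z ∈ W₂, z ∈ B) ∧ (∀ z ∈ W₃, z ∈ B) ∧
      v₁ ∈ W₁ ∧ v₂ ∈ W₂ ∧ v₃ ∈ W₃ ∧
      (G.induce W₁).Connected ∧ (G.induce W₂).Connected ∧ (G.induce W₃).Connected ∧
      Disjoint W₁ W₂ ∧ Disjoint W₁ W₃ ∧ Disjoint W₂ W₃ ∧
      (∃ a ∈ W₁, ∃ b ∈ W₂, G.Adj a b) ∧ (∃ a ∈ W₁, ∃ b ∈ W₃, G.Adj a b) ∧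
      (∃ a ∈ W₂, ∃ b ∈ W₃, G.Adj a b) by
    obtain ⟨W₁, W₂, W₃, hs₁, hs₂, hs₃, m₁, m₂, m₃, c₁, c₂, c₃, d₁₂, d₁₃, d₂₃,
      a₁₂, a₁₃, a₂₃⟩ := hmain
    have hsym : ∀ {X Y : Set V}, (∃ a ∈ X, ∃ b ∈ Y, G.Adj a b) →
        ∃ a ∈ Y, ∃ b ∈ X, G.Adj a b := by
      rintro X Y ⟨a, ha, b, hb, hab⟩
      exact ⟨b, hb, a, ha, hab.symm⟩
    obtain ⟨h₁, hh₁, hadj₁⟩ := hn₁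
    obtain ⟨h₂, hh₂, hadj₂⟩ := hn₂
    obtain ⟨h₃, hh₃, hadj₃⟩ := hn₃
    have dH : ∀ {X : Set V}, (∀ z ∈ X, z ∈ B) → Disjoint X H :=
      fun hX => hdisj.mono_left (fun z hz => hX z hz)
    refine ⟨![W₁, W₂, W₃, H], ?_, ?_, ?_, ?_⟩
    · intro i
      fin_cases i
      exacts [⟨v₁, m₁⟩, ⟨v₂, m₂⟩, ⟨v₃, m₃⟩, ⟨h₁, hh₁⟩]
    · intro i
      fin_cases i
      exacts [c₁, c₂, c₃, hHconn]
    · intro i j hij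
      fin_cases i <;> fin_cases j
      exacts [absurd rfl hij, d₁₂, d₁₃, dH hs₁,
        d₁₂.symm, absurd rfl hij, d₂₃, dH hs₂,
        d₁₃.symm, d₂₃.symm, absurd rfl hij, dH hs₃,
        (dH hs₁).symm, (dH hs₂).symm, (dH hs₃).symm, absurd rfl hij]
    · intro i j hij
      fin_cases i <;> fin_cases j
      exacts [absurd rfl hij, a₁₂, a₁₃, ⟨v₁, m₁, h₁, hh₁, hadj₁⟩,
        hsym a₁₂, absurd rfl hij, a₂₃, ⟨v₂, m₂, h₂, hh₂, hadj₂⟩,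
        hsym a₁₃, hsym a₂₃, absurd rfl hij, ⟨v₃, m₃, h₃, hh₃, hadj₃⟩,
        hsym ⟨v₁, m₁, h₁, hh₁, hadj₁⟩, hsym ⟨v₂, m₂, h₂, hh₂, hadj₂⟩,
        hsym ⟨v₃, m₃, h₃, hh₃, hadj₃⟩, absurd rfl hij]
  -- build the three branch sets inside B
  obtain ⟨p, q, hpp, hqp, hpB, hqB, hint⟩ :=
    good_of_ne hBconn hB2conn hBcard hBfin v₁ v₂ hv₁ hv₂ h12
  have hint' : ∀ z, z ∈ q.support → z ∈ p.support → z = v₁ ∨ z = v₂ :=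
    fun z h1 h2 => hint z h2 h1
  by_cases h3p : v₃ ∈ p.support
  · exact three_split p q hpp hqp hpB hqB hint h12 h3p h13.symm h23.symm
  by_cases h3q : v₃ ∈ q.support
  · obtain ⟨W₁, W₂, W₃, hs₁, hs₂, hs₃, rest⟩ :=
      three_split q p hqp hpp hqB hpB hint' h12 h3q h13.symm h23.symm
    exact ⟨W₁, W₂, W₃, hs₁, hs₂, hs₃, rest⟩
  · -- v₃ is outside the cycle
    have hv₃S : ¬(v₃ ∈ p.support ∨ v₃ ∈ q.support) := by
      rintro (h | h) <;> [exact h3p h; exact h3q h]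
    obtain ⟨t₁w, ht₁wp, ht₁wB⟩ := exists_path_in_set hBconn hv₃ hv₁
    obtain ⟨x, t₁, ht₁path, hxS, ht₁sub, ht₁first⟩ :=
      truncate_at_first (S := {z | z ∈ p.support ∨ z ∈ q.support}) t₁w ht₁wp
        (Or.inl p.start_mem_support)
    have ht₁B : ∀ z ∈ t₁.support, z ∈ B := fun z hz => ht₁wB z (ht₁sub z hz)
    have hv₃x : v₃ ≠ x := fun h => hv₃S (h ▸ hxS)
    obtain ⟨c₁, u₁, hu₁path, hc₁x, hchar₁⟩ := penult_split t₁ ht₁path hv₃x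
    have hxB : x ∈ B := ht₁B x t₁.end_mem_support
    obtain ⟨w₀, hw₀S, hw₀B, hw₀x⟩ : ∃ w₀, (w₀ ∈ p.support ∨ w₀ ∈ q.support) ∧
        w₀ ∈ B ∧ w₀ ≠ x := by
      by_cases hxv : x = v₁
      · exact ⟨v₂, Or.inl p.end_mem_support, hv₂, fun h => h12 (h.trans hxv).symm⟩
      · exact ⟨v₁, Or.inl p.start_mem_support, hv₁, fun h => hxv h.symm⟩
    obtain ⟨t₂w, ht₂wp, ht₂wB⟩ := exists_path_in_set (hB2conn x hxB)
      (⟨hv₃, by simp [hv₃x]⟩ : v₃ ∈ B \ {x}) (⟨hw₀B, by simp [hw₀x]⟩ : w₀ ∈ B \ {x})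
    obtain ⟨y, t₂, ht₂path, hyS, ht₂sub, ht₂first⟩ :=
      truncate_at_first (S := {z | z ∈ p.support ∨ z ∈ q.support}) t₂w ht₂wp hw₀S
    have ht₂B : ∀ z ∈ t₂.support, z ∈ B \ {x} := fun z hz => ht₂wB z (ht₂sub z hz)
    have hyx : y ≠ x := by
      have := (ht₂B y t₂.end_mem_support).2
      simpa using this
    have hv₃y : v₃ ≠ y := fun h => hv₃S (h ▸ hyS)
    obtain ⟨c₂, u₂, hu₂path, hc₂y, hchar₂⟩ := penult_split t₂ ht₂path hv₃y
    obtain ⟨W₁, W₂, cc₁, cc₂, hd₁₂, hadj₁₂, m₁, m₂, hor, s₁, s₂⟩ :=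
      attach_pair p q hpp hqp hint h12 hxS hyS hyx.symm
    set W₃ : Set V := {z | z ∈ u₁.support} ∪ {z | z ∈ u₂.support} with hW₃def
    have hW₃conn : (G.induce W₃).Connected :=
      induce_union_connected u₁.connected_induce_support.preconnected u₂.connected_induce_support.preconnected
        ⟨v₃, u₁.start_mem_support, u₂.start_mem_support⟩
    have hW₃B : ∀ z ∈ W₃, z ∈ B := by
      rintro z (hz | hz)
      · exact ht₁B z ((hchar₁ z).mp hz).1
      · exact (ht₂B z ((hchar₂ z).mp hz).1).1
    have hW₃S : ∀ z ∈ W₃, ¬(z ∈ p.support ∨ z ∈ q.support) := by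
      rintro z (hz | hz) hzS
      · exact ((hchar₁ z).mp hz).2 (ht₁first z ((hchar₁ z).mp hz).1 hzS)
      · exact ((hchar₂ z).mp hz).2 (ht₂first z ((hchar₂ z).mp hz).1 hzS)
    have hd₁₃ : Disjoint W₁ W₃ := by
      rw [Set.disjoint_left]
      intro z hz₁ hz₃
      exact hW₃S _ hz₃ (s₁ _ hz₁)
    have hd₂₃ : Disjoint W₂ W₃ := by
      rw [Set.disjoint_left]
      intro z hz₂ hz₃
      exact hW₃S _ hz₃ (s₂ _ hz₂)
    have hc₁W₃ : c₁ ∈ W₃ := Or.inl u₁.end_mem_support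
    have hc₂W₃ : c₂ ∈ W₃ := Or.inr u₂.end_mem_support
    have hadj₁₃ : ∃ a ∈ W₁, ∃ b ∈ W₃, G.Adj a b := by
      rcases hor with ⟨hxW₁, _⟩ | ⟨_, hyW₁⟩
      · exact ⟨x, hxW₁, c₁, hc₁W₃, hc₁x.symm⟩
      · exact ⟨y, hyW₁, c₂, hc₂W₃, hc₂y.symm⟩
    have hadj₂₃ : ∃ a ∈ W₂, ∃ b ∈ W₃, G.Adj a b := by
      rcases hor with ⟨_, hyW₂⟩ | ⟨hxW₂, _⟩
      · exact ⟨y, hyW₂, c₂, hc₂W₃, hc₂y.symm⟩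
      · exact ⟨x, hxW₂, c₁, hc₁W₃, hc₁x.symm⟩
    refine ⟨W₁, W₂, W₃, ?_, ?_, hW₃B, m₁, m₂, Or.inl u₁.start_mem_support,
      cc₁, cc₂, hW₃conn, hd₁₂, hd₁₃, hd₂₃, hadj₁₂, hadj₁₃, hadj₂₃⟩
    · intro z hz
      rcases s₁ z hz with h | h
      · exact hpB z h
      · exact hqB z h
    · intro z hz
      rcases s₂ z hz with h | h
      · exact hpB z h
      · exact hqB z h
end

section
/- Let G be a finite simple graph, let x be a vertex, and let P be a simple path in G − x visiting three distinct neighbours v₁, v₂, v₃ of x in this order along P. If there exists a path Q in G − {v₂, x} from v₁ to v₃, then G contains a K₄ minor model: four pairwise disjoint nonempty vertex sets, each inducing a connected subgraph of G, pairwise joined by an edge of G. -/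
open SimpleGraph

/-- Splitting a walk at the first vertex belonging to a set `S` containing the endpoint. -/
private lemma walk_split_first {V : Type*} {G : SimpleGraph V} {u v : V} (S : Set V)
    (q : G.Walk u v) (hv : v ∈ S) :
    ∃ w, w ∈ S ∧ ∃ (q₁ : G.Walk u w) (q₂ : G.Walk w v),
      q₁.append q₂ = q ∧ ∀ y ∈ q₁.support, y ≠ w → y ∉ S := by
  classical
  induction q with
  | nil =>
    refine ⟨_, hv, .nil, .nil, rfl, ?_⟩
    intro y hy hne
    simp only [Walk.support_nil, List.mem_singleton] at hy
    exact absurd hy hne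
  | @cons a c d h p ih =>
    by_cases ha : a ∈ S
    · refine ⟨a, ha, .nil, .cons h p, rfl, ?_⟩
      intro y hy hne
      simp only [Walk.support_nil, List.mem_singleton] at hy
      exact absurd hy hne
    · obtain ⟨w, hw, q₁, q₂, heq, hfirst⟩ := ih hv
      refine ⟨w, hw, .cons h q₁, q₂, by rw [Walk.cons_append, heq], ?_⟩
      intro y hy hne
      simp only [Walk.support_cons, List.mem_cons] at hy
      rcases hy with rfl | hy
      · exact ha
      · exact hfirst y hy hne

/-- A pair `[w, u]` cannot be a sublist of `u :: t` when `u ∉ t`. -/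
private lemma pair_not_sublist_cons {α : Type*} {u w : α} {t : List α}
    (h : [w, u].Sublist (u :: t)) (hu : u ∉ t) : False := by
  cases h with
  | cons _ h' => exact hu (h'.subset (by simp))
  | cons_cons _ h' => exact hu (h'.subset (by simp))

/-- If a simple path `P` avoiding `x` visits three neighbours `v₁, v₂, v₃` of `x` in this
order, and there is a path `Q` from `v₁` to `v₃` avoiding both `v₂` and `x`, then `G`
contains a `K₄` minor model. -/
theorem x_path_nonseparator_gives_K4_minor
    {V : Type*} [Fintype V] [DecidableEq V] (G : SimpleGraph V)
    (x : V) {a b : V} (P : G.Walk a b) (hP : P.IsPath) (hxP : x ∉ P.support)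
    (v₁ v₂ v₃ : V)
    (h₁ : G.Adj x v₁) (h₂ : G.Adj x v₂) (h₃ : G.Adj x v₃)
    (horder : [v₁, v₂, v₃].Sublist P.support)
    (Q : G.Walk v₁ v₃) (hxQ : x ∉ Q.support) (hv₂Q : v₂ ∉ Q.support) :
    ∃ W : Fin 4 → Set V,
      (∀ i, (W i).Nonempty) ∧
      (∀ i, (G.induce (W i)).Connected) ∧
      (∀ i j, i ≠ j → Disjoint (W i) (W j)) ∧
      (∀ i j, i ≠ j → ∃ u ∈ W i, ∃ w ∈ W j, G.Adj u w) := by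
  classical
  -- distinctness of v₁, v₂, v₃
  have htriple : [v₁, v₂, v₃].Nodup := hP.support_nodup.sublist horder
  have hne12 : v₁ ≠ v₂ := by simp at htriple; tauto
  have hne23 : v₂ ≠ v₃ := by simp at htriple; tauto
  -- split P at v₂
  have hv₂P : v₂ ∈ P.support := horder.subset (by simp)
  set P1 := P.takeUntil v₂ hv₂P with hP1def
  set P2 := P.dropUntil v₂ hv₂P with hP2def
  have hsupp : P.support = P1.support ++ P2.support.tail := by
    conv_lhs => rw [← Walk.take_spec P hv₂P]
    rw [Walk.support_append]
  have hP1 : P1.IsPath := hP.takeUntil hv₂P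
  have hP2 : P2.IsPath := hP.dropUntil hv₂P
  have hnodup : (P1.support ++ P2.support.tail).Nodup := hsupp ▸ hP.support_nodup
  have hdisj : ∀ y, y ∈ P1.support → y ∈ P2.support.tail → False := by
    intro y h1 h2
    exact (List.disjoint_of_nodup_append hnodup) h1 h2
  have hv₂tail : v₂ ∉ P2.support.tail := fun h => hdisj v₂ P1.end_mem_support h
  -- locate v₁ in P1 and v₃ in the tail of P2
  have hkey : v₁ ∈ P1.support ∧ v₃ ∈ P2.support.tail := by
    rw [hsupp] at horder
    obtain ⟨l₁, l₂, heq, hl₁, hl₂⟩ := List.sublist_append_iff.mp horder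
    match l₁, heq with
    | [], heq =>
      exfalso
      have h2 : l₂ = [v₁, v₂, v₃] := by simpa using heq.symm
      rw [h2] at hl₂
      exact hv₂tail (hl₂.subset (by simp))
    | [w₁], heq =>
      exfalso
      obtain ⟨rfl, h2⟩ : w₁ = v₁ ∧ l₂ = [v₂, v₃] := by
        simpa using heq.symm
      rw [h2] at hl₂
      exact hv₂tail (hl₂.subset (by simp))
    | [w₁, w₂], heq =>
      obtain ⟨rfl, rfl, h2⟩ : w₁ = v₁ ∧ w₂ = v₂ ∧ l₂ = [v₃] := by
        simpa using heq.symm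
      rw [h2] at hl₂
      exact ⟨hl₁.subset (by simp), hl₂.subset (by simp)⟩
    | w₁ :: w₂ :: w₃ :: l', heq =>
      exfalso
      obtain ⟨hw1, hw2, hw3, -⟩ : w₁ = v₁ ∧ w₂ = v₂ ∧ w₃ = v₃ ∧ l' ++ l₂ = [] := by
        have h := heq.symm
        simp only [List.cons_append, List.cons.injEq] at h
        exact ⟨h.1, h.2.1, h.2.2.1, h.2.2.2⟩
      -- [w₁, w₂, w₃] <+ P1.support, but P1 ends at v₂ = w₂
      have h23 : [w₂, w₃].Sublist P1.support :=
        ((List.sublist_cons_self w₁ [w₂, w₃]).trans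
          ((List.sublist_append_left _ l').trans hl₁))
      rw [hw2, hw3] at h23
      have hrev : [v₃, v₂].Sublist P1.reverse.support := by
        rw [Walk.support_reverse]
        simpa using h23.reverse
      have hcons : P1.reverse.support = v₂ :: P1.reverse.support.tail :=
        Walk.support_eq_cons _
      have hnd : P1.reverse.support.Nodup := hP1.reverse.support_nodup
      rw [hcons] at hrev hnd
      exact pair_not_sublist_cons hrev (List.nodup_cons.mp hnd).1
  obtain ⟨hv₁P1, hv₃tail⟩ := hkey
  have hv₃P2 : v₃ ∈ P2.support := List.mem_of_mem_tail hv₃tail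
  -- the left branch set: segment of P1 from (just after) v₂ back to v₁
  set R1 := P1.dropUntil v₁ hv₁P1 with hR1def
  have hR1 : R1.IsPath := hP1.dropUntil hv₁P1
  have hR1sub : R1.support ⊆ P1.support := Walk.support_dropUntil_subset _ _
  have hnnL : ¬ R1.reverse.Nil := Walk.not_nil_of_ne (Ne.symm hne12)
  set Ltail := R1.reverse.tail with hLdef
  have hLcons : v₂ :: Ltail.support = R1.reverse.support :=
    Walk.cons_support_tail hnnL
  set Lset : Set V := {y | y ∈ Ltail.support} with hLsetdef
  have hLsub : ∀ y ∈ Lset, y ∈ P1.support := by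
    intro y hy
    have : y ∈ R1.reverse.support := by rw [← hLcons]; exact List.mem_cons_of_mem _ hy
    rw [Walk.support_reverse, List.mem_reverse] at this
    exact hR1sub this
  have hv₂L : v₂ ∉ Lset := by
    have hnd : (v₂ :: Ltail.support).Nodup := by
      rw [hLcons]; exact hR1.reverse.support_nodup
    exact (List.nodup_cons.mp hnd).1
  have hv₁L : v₁ ∈ Lset := Ltail.end_mem_support
  have hadjL : G.Adj v₂ (R1.reverse.getVert 1) := R1.reverse.adj_snd hnnL
  have hσL : R1.reverse.getVert 1 ∈ Lset := Ltail.start_mem_support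
  -- the right branch set: segment of P2 from (just after) v₂ to v₃
  set R2 := P2.takeUntil v₃ hv₃P2 with hR2def
  have hR2 : R2.IsPath := hP2.takeUntil hv₃P2
  have hnnR : ¬ R2.Nil := Walk.not_nil_of_ne hne23
  set Rtail := R2.tail with hRdef
  have hRcons : v₂ :: Rtail.support = R2.support := Walk.cons_support_tail hnnR
  set Rset : Set V := {y | y ∈ Rtail.support} with hRsetdef
  have hRsub : ∀ y ∈ Rset, y ∈ P2.support.tail := by
    intro y hy
    have hsplit : P2.support = R2.support ++ (P2.dropUntil v₃ hv₃P2).support.tail := by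
      conv_lhs => rw [← Walk.take_spec P2 hv₃P2]
      rw [Walk.support_append]
    rw [← hRcons, List.cons_append] at hsplit
    rw [hsplit]
    exact List.mem_append_left _ hy
  have hv₂R : v₂ ∉ Rset := by
    have hnd : (v₂ :: Rtail.support).Nodup := by
      rw [hRcons]; exact hR2.support_nodup
    exact (List.nodup_cons.mp hnd).1
  have hv₃R : v₃ ∈ Rset := Rtail.end_mem_support
  have hadjR : G.Adj v₂ (R2.getVert 1) := R2.adj_snd hnnR
  have hσR : R2.getVert 1 ∈ Rset := Rtail.start_mem_support
  -- split Q at the first vertex lying in Rset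
  set q : G.Walk v₁ v₃ := (Q.toPath : G.Walk v₁ v₃) with hqdef
  have hq : q.IsPath := Q.toPath.2
  have hqsub : q.support ⊆ Q.support := Q.support_toPath_subset
  obtain ⟨w, hwR, q₁, q₂, happ, hfirst⟩ := walk_split_first Rset q hv₃R
  have hq₁path : q₁.IsPath := by
    apply Walk.IsPath.of_append_left (q := q₂); rw [happ]; exact hq
  have hq₁sub : q₁.support ⊆ q.support := by
    intro y hy
    rw [← happ, Walk.support_append]
    exact List.mem_append_left _ hy
  have hv₁w : v₁ ≠ w := by
    rintro rfl
    exact hdisj v₁ hv₁P1 (hRsub _ hwR)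
  have hnnQ : ¬ q₁.reverse.Nil := Walk.not_nil_of_ne (Ne.symm hv₁w)
  set Qtail := q₁.reverse.tail with hQdef
  have hQcons : w :: Qtail.support = q₁.reverse.support :=
    Walk.cons_support_tail hnnQ
  set Qinit : Set V := {y | y ∈ Qtail.support} with hQsetdef
  have hQsub : ∀ y ∈ Qinit, y ∈ q₁.support := by
    intro y hy
    have : y ∈ q₁.reverse.support := by rw [← hQcons]; exact List.mem_cons_of_mem _ hy
    rwa [Walk.support_reverse, List.mem_reverse] at this
  have hwQ : w ∉ Qinit := by
    have hnd : (w :: Qtail.support).Nodup := by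
      rw [hQcons]; exact hq₁path.reverse.support_nodup
    exact (List.nodup_cons.mp hnd).1
  have hv₁Q : v₁ ∈ Qinit := Qtail.end_mem_support
  have hQR : ∀ y ∈ Qinit, y ∉ Rset := by
    intro y hy
    exact hfirst y (hQsub y hy) (fun h => hwQ (h ▸ hy))
  have hadjQ : G.Adj w (q₁.reverse.getVert 1) := q₁.reverse.adj_snd hnnQ
  have hσQ : q₁.reverse.getVert 1 ∈ Qinit := Qtail.start_mem_support
  -- x avoids everything; v₂ avoids Q
  have hxL : x ∉ Lset := fun h => hxP (hsupp ▸ List.mem_append_left _ (hLsub x h))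
  have hxR : x ∉ Rset := fun h => hxP (hsupp ▸ List.mem_append_right _ (hRsub x h))
  have hxQi : x ∉ Qinit := fun h => hxQ (hqsub (hq₁sub (hQsub x h)))
  have hv₂Qi : v₂ ∉ Qinit := fun h => hv₂Q (hqsub (hq₁sub (hQsub v₂ h)))
  have hxv₂ : x ≠ v₂ := h₂.ne
  -- assemble the branch sets
  refine ⟨![{x}, {v₂}, Lset ∪ Qinit, Rset], ?_, ?_, ?_, ?_⟩
  · intro i
    fin_cases i
    · exact ⟨x, rfl⟩
    · exact ⟨v₂, rfl⟩
    · exact ⟨v₁, Or.inl hv₁L⟩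
    · exact ⟨v₃, hv₃R⟩
  · have hsing : ∀ y : V, (G.induce {y}).Connected := by
      intro y
      rw [connected_iff_exists_forall_reachable]
      refine ⟨⟨y, rfl⟩, ?_⟩
      rintro ⟨z, hz⟩
      cases hz
      rfl
    intro i
    fin_cases i
    · exact hsing x
    · exact hsing v₂
    · exact induce_union_connected Ltail.connected_induce_support.preconnected
        Qtail.connected_induce_support.preconnected ⟨v₁, hv₁L, hv₁Q⟩
    · exact Rtail.connected_induce_support
  · have d01 : Disjoint ({x} : Set V) {v₂} := by
      simp [Set.disjoint_singleton, hxv₂]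
    have d02 : Disjoint ({x} : Set V) (Lset ∪ Qinit) := by
      rw [Set.disjoint_left]
      rintro y rfl (h | h)
      · exact hxL h
      · exact hxQi h
    have d03 : Disjoint ({x} : Set V) Rset := by
      rw [Set.disjoint_left]; rintro y rfl h; exact hxR h
    have d12 : Disjoint ({v₂} : Set V) (Lset ∪ Qinit) := by
      rw [Set.disjoint_left]
      rintro y rfl (h | h)
      · exact hv₂L h
      · exact hv₂Qi h
    have d13 : Disjoint ({v₂} : Set V) Rset := by
      rw [Set.disjoint_left]; rintro y rfl h; exact hv₂R h
    have d23 : Disjoint (Lset ∪ Qinit) Rset := by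
      rw [Set.disjoint_left]
      rintro y (h | h) hr
      · exact hdisj y (hLsub y h) (hRsub y hr)
      · exact hQR y h hr
    intro i j hij
    fin_cases i <;> fin_cases j <;>
      first
        | exact absurd rfl hij
        | exact d01 | exact d02 | exact d03 | exact d12 | exact d13 | exact d23
        | exact d01.symm | exact d02.symm | exact d03.symm
        | exact d12.symm | exact d13.symm | exact d23.symm
  · intro i j hij
    fin_cases i <;> fin_cases j <;>
      first
        | exact absurd rfl hij
        | exact ⟨x, rfl, v₂, rfl, h₂⟩
        | exact ⟨v₂, rfl, x, rfl, h₂.symm⟩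
        | exact ⟨x, rfl, v₁, Or.inl hv₁L, h₁⟩
        | exact ⟨v₁, Or.inl hv₁L, x, rfl, h₁.symm⟩
        | exact ⟨x, rfl, v₃, hv₃R, h₃⟩
        | exact ⟨v₃, hv₃R, x, rfl, h₃.symm⟩
        | exact ⟨v₂, rfl, _, Or.inl hσL, hadjL⟩
        | exact ⟨_, Or.inl hσL, v₂, rfl, hadjL.symm⟩
        | exact ⟨v₂, rfl, _, hσR, hadjR⟩
        | exact ⟨_, hσR, v₂, rfl, hadjR.symm⟩
        | exact ⟨_, Or.inr hσQ, w, hwR, hadjQ.symm⟩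
        | exact ⟨w, hwR, _, Or.inr hσQ, hadjQ⟩
end
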